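/- Fix α > 0 and let (X_m)_{m∈ℤ} be the heavy-tailed i.i.d. family of the long-range model. Then 0 < ℙ( X_m < |m| for every m ∈ ℤ ) ≤ 1/2. -/

import Mathlib

open MeasureTheory ProbabilityTheory Filter Topology
open scoped ENNReal

/-- The normalizing constant `Z_α = Σ_{k ≠ 0} |k|^{-(2+α)}` of the heavy-tailed law. -/
noncomputable def Zalpha (α : ℝ) : ℝ :=
  ∑' k : ℤ, if k = 0 then 0 else |(k : ℝ)| ^ (-(2 + α))

/-- A site `k ∈ ℤ` is illuminated (for the configuration `ω`) if some lamp `m`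
has brightness `X m ω ≥ |m - k|`. -/
def Illuminated {Ω : Type*} (X : ℤ → Ω → ℤ) (k : ℤ) (ω : Ω) : Prop :=
  ∃ m : ℤ, |m - k| ≤ X m ω

/-- The field `Θ_k`: equal to `1` on illuminated sites and `2` otherwise. -/
noncomputable def ThetaSite {Ω : Type*} (X : ℤ → Ω → ℤ) (k : ℤ) (ω : Ω) : ℝ :=
  haveI := Classical.propDecidable (Illuminated X k ω)
  if Illuminated X k ω then 1 else 2

/-- The random step function `θ^stripe(x) = Θ_{⌊x⌋}`. -/
noncomputable def thetaStripe {Ω : Type*} (X : ℤ → Ω → ℤ) (x : ℝ) (ω : Ω) : ℝ :=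
  ThetaSite X ⌊x⌋ ω

lemma ennreal_one_sub_add_le (a b : ℝ≥0∞) : 1 - (a + b) ≤ (1 - a) * (1 - b) := by
  rcases le_or_gt 1 (a + b) with h | h
  · simp [tsub_eq_zero_of_le h]
  · have ha : a ≤ 1 := le_of_lt (lt_of_le_of_lt le_self_add h)
    have hb : b ≤ 1 := le_of_lt (lt_of_le_of_lt le_add_self h)
    rw [tsub_le_iff_right]
    calc (1:ℝ≥0∞) = (1 - a) * ((1 - b) + b) + a := by
          rw [tsub_add_cancel_of_le hb, mul_one, tsub_add_cancel_of_le ha]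
      _ = (1 - a) * (1 - b) + (1 - a) * b + a := by rw [mul_add]
      _ ≤ (1 - a) * (1 - b) + 1 * b + a := by gcongr; exact tsub_le_self
      _ = (1 - a) * (1 - b) + (a + b) := by rw [one_mul]; ring

lemma ennreal_one_sub_sum_le_prod {ι : Type*} (s : Finset ι) (p : ι → ℝ≥0∞) :
    1 - ∑ i ∈ s, p i ≤ ∏ i ∈ s, (1 - p i) := by
  induction s using Finset.cons_induction with
  | empty => simp
  | cons a s ha ih =>
    rw [Finset.sum_cons, Finset.prod_cons]
    calc 1 - (p a + ∑ i ∈ s, p i) ≤ (1 - p a) * (1 - ∑ i ∈ s, p i) :=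
          ennreal_one_sub_add_le _ _
      _ ≤ (1 - p a) * ∏ i ∈ s, (1 - p i) := mul_le_mul_right ih _

/-- The law of the long-range model is nontrivial: the probability that the site `0` is
not illuminated, i.e. that `X_m < |m|` for every `m ∈ ℤ`, lies in `(0, 1/2]`. -/
theorem nontrivial_law {Ω : Type*} [MeasurableSpace Ω] (μ : Measure Ω) [IsProbabilityMeasure μ]
    (α : ℝ) (hα : 0 < α)
    (X : ℤ → Ω → ℤ) (hXm : ∀ m, Measurable (X m))
    (hindep : iIndepFun X μ)
    (hident : ∀ m : ℤ, IdentDistrib (X m) (X 0) μ μ)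
    (hlaw : ∀ k : ℤ, k ≠ 0 →
      μ {ω | X 0 ω = k} = ENNReal.ofReal ((Zalpha α)⁻¹ * |(k : ℝ)| ^ (-(2 + α))))
    (hlaw0 : μ {ω | X 0 ω = 0} = 0) :
    0 < μ {ω | ∀ m : ℤ, X m ω < |m|} ∧ μ {ω | ∀ m : ℤ, X m ω < |m|} ≤ 1 / 2 := by
  have hmeas : ∀ s : Set ℤ, MeasurableSet s := fun s => (Set.to_countable s).measurableSet
  set ν : Measure ℤ := μ.map (X 0) with hνdef
  haveI : IsProbabilityMeasure ν := Measure.isProbabilityMeasure_map (hXm 0).aemeasurable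
  have hν : ∀ k : ℤ, ν {k} = μ {ω | X 0 ω = k} := fun k => by
    rw [hνdef, Measure.map_apply (hXm 0) (hmeas _)]; rfl
  have hsing : ∀ k : ℤ, k ≠ 0 →
      ν {k} = ENNReal.ofReal ((Zalpha α)⁻¹ * |(k : ℝ)| ^ (-(2 + α))) := fun k hk => by
    rw [hν, hlaw k hk]
  have hsing0 : ν {(0:ℤ)} = 0 := by rw [hν, hlaw0]
  have hZinv : 0 ≤ (Zalpha α)⁻¹ := by
    apply inv_nonneg.mpr
    apply tsum_nonneg
    intro k
    split
    · exact le_rfl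
    · positivity
  -- ### the probability of a nonpositive value is `1/2`
  have hIio : ν (Set.Iio 0) = ∑' n : ℕ, ν {(-(n+1) : ℤ)} := by
    have hs : Set.Iio (0:ℤ) = ⋃ n : ℕ, {(-(n+1) : ℤ)} := by
      ext k
      simp only [Set.mem_Iio, Set.mem_iUnion, Set.mem_singleton_iff]
      constructor
      · intro h; exact ⟨(-k-1).toNat, by omega⟩
      · rintro ⟨n, rfl⟩; omega
    rw [hs, measure_iUnion ?_ fun n => hmeas _]
    intro i j hij
    simp only [Function.onFun, Set.disjoint_singleton]
    omega
  have hIoi : ν (Set.Ioi 0) = ∑' n : ℕ, ν {((n:ℤ)+1)} := by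
    have hs : Set.Ioi (0:ℤ) = ⋃ n : ℕ, {((n:ℤ)+1)} := by
      ext k
      simp only [Set.mem_Ioi, Set.mem_iUnion, Set.mem_singleton_iff]
      constructor
      · intro h; exact ⟨(k-1).toNat, by omega⟩
      · rintro ⟨n, rfl⟩; omega
    rw [hs, measure_iUnion ?_ fun n => hmeas _]
    intro i j hij
    simp only [Function.onFun, Set.disjoint_singleton]
    omega
  have hsym : ∀ n : ℕ, ν {(-(n+1) : ℤ)} = ν {((n:ℤ)+1)} := by
    intro n
    rw [hsing _ (by omega), hsing _ (by omega)]
    congr 2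
    push_cast
    rw [abs_neg]
  have hhalf : ν (Set.Iio 0) = 1/2 := by
    have h1 : ν (Set.Iio 0) + ν (Set.Ici 0) = 1 := by
      rw [← measure_union (Set.Iio_disjoint_Ici le_rfl) (hmeas _), Set.Iio_union_Ici,
        measure_univ]
    have h2 : ν (Set.Ici (0:ℤ)) = ν {(0:ℤ)} + ν (Set.Ioi 0) := by
      have : Set.Ici (0:ℤ) = {0} ∪ Set.Ioi 0 := by
        ext k; simp only [Set.mem_Ici, Set.mem_union, Set.mem_singleton_iff, Set.mem_Ioi]; omega
      rw [this, measure_union ?_ (hmeas _)]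
      simp only [Set.disjoint_singleton_left, Set.mem_Ioi]
      omega
    have heq : ν (Set.Iio 0) = ν (Set.Ioi 0) := by
      rw [hIio, hIoi]; exact tsum_congr hsym
    rw [h2, hsing0, zero_add, ← heq] at h1
    rw [ENNReal.eq_div_iff (by norm_num) (by norm_num), two_mul]
    exact h1
  -- ### summability of the tail probabilities
  have hS : (∑' m : ℤ, ν (Set.Ici |m|)) ≠ ∞ := by
    have h1 : ∀ m : ℤ, ν (Set.Ici |m|)
        = ∑' k : ℤ, (Set.Ici |m|).indicator (fun j => ν {j}) k := by
      intro m
      have e1 : ν (Set.Ici |m|) = ∑' x : ↥(Set.Ici |m|), ν {(x:ℤ)} := by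
        conv_lhs => rw [← Set.biUnion_of_singleton (Set.Ici |m|)]
        exact measure_biUnion (Set.to_countable _)
          (fun a _ b _ hab => by simpa [Set.disjoint_singleton] using hab)
          (fun k _ => hmeas _)
      rw [e1]
      exact tsum_subtype (Set.Ici |m|) (fun j => ν {j})
    have h2 : (∑' m : ℤ, ν (Set.Ici |m|))
        = ∑' k : ℤ, (Finset.Icc (-k) k).card • ν {k} := by
      simp_rw [h1]
      rw [ENNReal.tsum_comm]
      refine tsum_congr fun k => ?_
      have hind : ∀ m : ℤ, (Set.Ici |m|).indicator (fun j => ν {j}) k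
          = if |m| ≤ k then ν {k} else 0 := by
        intro m
        simp [Set.indicator_apply, Set.mem_Ici]
      simp_rw [hind]
      rw [tsum_eq_sum (s := Finset.Icc (-k) k) ?_]
      · rw [Finset.sum_congr rfl (g := fun _ => ν {k}) ?_, Finset.sum_const]
        intro m hm
        simp only [Finset.mem_Icc] at hm
        rw [if_pos (abs_le.mpr ⟨hm.1, hm.2⟩)]
      · intro m hm
        rw [if_neg]
        intro hab
        exact hm (Finset.mem_Icc.mpr ⟨(abs_le.mp hab).1, (abs_le.mp hab).2⟩)
    set F : ℤ → ℝ≥0∞ := fun k =>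
      if 0 < k then ENNReal.ofReal (3 * (Zalpha α)⁻¹ * (k:ℝ) ^ (-(1+α))) else 0 with hFdef
    have hbound : ∀ k : ℤ, (Finset.Icc (-k) k).card • ν {k} ≤ F k := by
      intro k
      rcases lt_trichotomy k 0 with hk | hk | hk
      · rw [Finset.Icc_eq_empty (by omega)]
        simp
      · subst hk; simp [hsing0]
      · rw [hFdef]
        simp only [if_pos hk]
        rw [Int.card_Icc, hsing k (by omega), nsmul_eq_mul, ← ENNReal.ofReal_natCast,
          ← ENNReal.ofReal_mul (by positivity)]
        apply ENNReal.ofReal_le_ofReal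
        have hx1 : (1:ℝ) ≤ (k:ℝ) := by exact_mod_cast hk
        have hx0 : (0:ℝ) < (k:ℝ) := by linarith
        have hcast : (((k + 1 - -k).toNat : ℕ) : ℝ) = 2*(k:ℝ)+1 := by
          have h : ((k + 1 - -k).toNat : ℤ) = k + 1 - -k := Int.toNat_of_nonneg (by omega)
          have h2 : (((k + 1 - -k).toNat : ℕ) : ℝ) = ((k + 1 - -k : ℤ) : ℝ) := by
            exact_mod_cast congrArg (Int.cast : ℤ → ℝ) h
          rw [h2]
          push_cast
          ring
        rw [hcast, abs_of_pos hx0]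
        have hrpow : (k:ℝ) ^ (-(1+α)) = (k:ℝ) * (k:ℝ) ^ (-(2+α)) := by
          rw [show -(1+α) = 1 + -(2+α) by ring, Real.rpow_add hx0, Real.rpow_one]
        rw [hrpow]
        have ht : (0:ℝ) ≤ (k:ℝ) ^ (-(2+α)) := Real.rpow_nonneg (le_of_lt hx0) _
        have hkey : 0 ≤ ((k:ℝ) - 1) * ((Zalpha α)⁻¹ * (k:ℝ) ^ (-(2+α))) :=
          mul_nonneg (by linarith) (mul_nonneg hZinv ht)
        nlinarith [hkey]
    have hFfin : (∑' k : ℤ, F k) ≠ ∞ := by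
      have hinj : Function.Injective (fun n : ℕ => (n:ℤ)+1) := fun a b h => by
        simpa using h
      have hsupp : Function.support F ⊆ Set.range (fun n : ℕ => (n:ℤ)+1) := by
        intro k hk
        have hk0 : 0 < k := by
          by_contra h
          exact hk (by rw [hFdef]; simp [h])
        refine ⟨(k-1).toNat, ?_⟩
        show ((k-1).toNat : ℤ) + 1 = k
        omega
      rw [← Function.Injective.tsum_eq hinj hsupp]
      have heq : ∀ n : ℕ, F ((n:ℤ)+1)
          = ENNReal.ofReal (3 * (Zalpha α)⁻¹ * ((n:ℝ)+1) ^ (-(1+α))) := by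
        intro n
        rw [hFdef]
        simp only [if_pos (by omega : (0:ℤ) < (n:ℤ)+1)]
        norm_num
      simp_rw [heq]
      have hsummable : Summable (fun n : ℕ => 3 * (Zalpha α)⁻¹ * ((n:ℝ)+1) ^ (-(1+α))) := by
        apply Summable.mul_left
        have hbase : Summable (fun n : ℕ => (n:ℝ) ^ (-(1+α))) :=
          Real.summable_nat_rpow.mpr (by linarith)
        have := (summable_nat_add_iff 1).mpr hbase
        simpa using this
      rw [← ENNReal.ofReal_tsum_of_nonneg (fun n => by positivity) hsummable]
      exact ENNReal.ofReal_ne_top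
    rw [h2]
    exact ne_top_of_le_ne_top hFfin (ENNReal.tsum_le_tsum hbound)
  -- ### transfer of the law of `X m` to `ν`
  have hq : ∀ m : ℤ, μ (X m ⁻¹' Set.Iio |m|) = ν (Set.Iio |m|) := fun m =>
    ((hident m).measure_mem_eq (hmeas _)).trans (Measure.map_apply (hXm 0) (hmeas _)).symm
  have hp : ∀ m : ℤ, μ (X m ⁻¹' Set.Ici |m|) = ν (Set.Ici |m|) := fun m =>
    ((hident m).measure_mem_eq (hmeas _)).trans (Measure.map_apply (hXm 0) (hmeas _)).symm
  have hqhalf : ∀ m : ℤ, 1/2 ≤ ν (Set.Iio |m|) := fun m =>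
    hhalf ▸ measure_mono (Set.Iio_subset_Iio (abs_nonneg m))
  have h1mp : ∀ i : ℤ, 1 - ν (Set.Ici |i|) ≤ ν (Set.Iio |i|) := by
    intro i
    have hqp : ν (Set.Iio |i|) + ν (Set.Ici |i|) = 1 := by
      rw [← measure_union (Set.Iio_disjoint_Ici le_rfl) (hmeas _), Set.Iio_union_Ici,
        measure_univ]
    rw [tsub_le_iff_right, ← hqp]
  -- ### independence : product formula for finite intersections
  have hprod : ∀ s : Finset ℤ, μ (⋂ m ∈ s, X m ⁻¹' Set.Iio |m|)
      = ∏ m ∈ s, ν (Set.Iio |m|) := by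
    intro s
    rw [hindep.measure_inter_preimage_eq_mul s (sets := fun m => Set.Iio |m|)
      (fun i _ => hmeas _)]
    exact Finset.prod_congr rfl fun m _ => hq m
  -- ### the union bound : finite intersections vs the full event
  have hkey : ∀ s : Finset ℤ, μ (⋂ m ∈ s, X m ⁻¹' Set.Iio |m|)
      ≤ μ {ω | ∀ m : ℤ, X m ω < |m|} + ∑' b : {x : ℤ // x ∉ s}, ν (Set.Ici |(b:ℤ)|) := by
    intro s
    have hsub : (⋂ m ∈ s, X m ⁻¹' Set.Iio |m|)
        ⊆ {ω | ∀ m : ℤ, X m ω < |m|} ∪ ⋃ b : {x : ℤ // x ∉ s}, X (b:ℤ) ⁻¹' Set.Ici |(b:ℤ)| := by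
      intro ω hω
      by_cases hωE : ∀ m : ℤ, X m ω < |m|
      · exact Or.inl hωE
      · push_neg at hωE
        obtain ⟨m, hm⟩ := hωE
        have hms : m ∉ s := fun hms =>
          absurd (Set.mem_iInter₂.mp hω m hms) (not_lt.mpr hm)
        exact Or.inr (Set.mem_iUnion.mpr ⟨⟨m, hms⟩, hm⟩)
    calc μ (⋂ m ∈ s, X m ⁻¹' Set.Iio |m|)
        ≤ μ ({ω | ∀ m : ℤ, X m ω < |m|}
            ∪ ⋃ b : {x : ℤ // x ∉ s}, X (b:ℤ) ⁻¹' Set.Ici |(b:ℤ)|) := measure_mono hsub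
      _ ≤ μ {ω | ∀ m : ℤ, X m ω < |m|}
            + μ (⋃ b : {x : ℤ // x ∉ s}, X (b:ℤ) ⁻¹' Set.Ici |(b:ℤ)|) := measure_union_le _ _
      _ ≤ μ {ω | ∀ m : ℤ, X m ω < |m|}
            + ∑' b : {x : ℤ // x ∉ s}, μ (X (b:ℤ) ⁻¹' Set.Ici |(b:ℤ)|) :=
          add_le_add_right (measure_iUnion_le _) _
      _ = μ {ω | ∀ m : ℤ, X m ω < |m|}
            + ∑' b : {x : ℤ // x ∉ s}, ν (Set.Ici |(b:ℤ)|) := by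
          congr 1
          exact tsum_congr fun b => hp _
  -- ### choice of the finite sets
  have htend := ENNReal.tendsto_tsum_compl_atTop_zero
    (f := fun m : ℤ => ν (Set.Ici |m|)) hS
  obtain ⟨s₀, hs₀⟩ := ((tendsto_order.1 htend).2 (1/2) (by norm_num)).exists
  have hhalf1 : (1:ℝ≥0∞) - 1/2 = 1/2 := ENNReal.sub_half ENNReal.one_ne_top
  have hc₀ : (0:ℝ≥0∞) < ∏ m ∈ s₀, ν (Set.Iio |m|) :=
    CanonicallyOrderedAdd.prod_pos.mpr fun i _ =>
      lt_of_lt_of_le (by norm_num) (hqhalf i)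
  set c : ℝ≥0∞ := (∏ m ∈ s₀, ν (Set.Iio |m|)) * (1/2) with hcdef
  have hcpos : 0 < c := ENNReal.mul_pos (ne_of_gt hc₀) (by norm_num)
  have hprodge : ∀ s : Finset ℤ, s₀ ⊆ s → c ≤ ∏ m ∈ s, ν (Set.Iio |m|) := by
    intro s hs
    rw [← Finset.prod_sdiff hs, mul_comm]
    refine mul_le_mul_right ?_ _
    have hsum : ∑ i ∈ s \ s₀, ν (Set.Ici |i|)
        ≤ ∑' b : {x : ℤ // x ∉ s₀}, ν (Set.Ici |(b:ℤ)|) := by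
      have heq : (∑' b : {x : ℤ // x ∉ s₀}, ν (Set.Ici |(b:ℤ)|))
          = ∑' m : ℤ, Set.indicator {x : ℤ | x ∉ s₀} (fun i => ν (Set.Ici |i|)) m :=
        tsum_subtype {x : ℤ | x ∉ s₀} (fun i => ν (Set.Ici |i|))
      rw [heq]
      refine le_trans (le_of_eq ?_) (ENNReal.sum_le_tsum (s \ s₀))
      refine Finset.sum_congr rfl fun i hi => ?_
      simp only [Finset.mem_sdiff] at hi
      exact (Set.indicator_of_mem (show i ∈ {x : ℤ | x ∉ s₀} from hi.2)
        (fun i => ν (Set.Ici |i|))).symm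
    calc (1:ℝ≥0∞)/2 = 1 - 1/2 := hhalf1.symm
      _ ≤ 1 - ∑' b : {x : ℤ // x ∉ s₀}, ν (Set.Ici |(b:ℤ)|) :=
          tsub_le_tsub_left hs₀.le 1
      _ ≤ 1 - ∑ i ∈ s \ s₀, ν (Set.Ici |i|) := tsub_le_tsub_left hsum 1
      _ ≤ ∏ i ∈ s \ s₀, (1 - ν (Set.Ici |i|)) := ennreal_one_sub_sum_le_prod _ _
      _ ≤ ∏ i ∈ s \ s₀, ν (Set.Iio |i|) := Finset.prod_le_prod' fun i _ => h1mp i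
  obtain ⟨s₁, hs₁T, hs₁ge⟩ :=
    (((tendsto_order.1 htend).2 c hcpos).and (eventually_ge_atTop s₀)).exists
  have hchain : c ≤ μ {ω | ∀ m : ℤ, X m ω < |m|}
      + ∑' b : {x : ℤ // x ∉ s₁}, ν (Set.Ici |(b:ℤ)|) :=
    le_trans (hprodge s₁ hs₁ge) (le_trans (le_of_eq (hprod s₁).symm) (hkey s₁))
  constructor
  · rw [pos_iff_ne_zero]
    intro h0
    rw [h0, zero_add] at hchain
    exact absurd (lt_of_le_of_lt hchain hs₁T) (lt_irrefl _)
  · have hsub0 : {ω | ∀ m : ℤ, X m ω < |m|} ⊆ X 0 ⁻¹' Set.Iio |(0:ℤ)| := fun ω h => h 0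
    calc μ {ω | ∀ m : ℤ, X m ω < |m|} ≤ μ (X 0 ⁻¹' Set.Iio |(0:ℤ)|) := measure_mono hsub0
      _ = ν (Set.Iio |(0:ℤ)|) := hq 0
      _ = 1/2 := by rw [show |(0:ℤ)| = 0 from abs_zero]; exact hhalf
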